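/- A nonzero element x = (x_n) of the c_0-direct sum ⊕_0 X_n is smooth if and only if there exists n_0 such that ‖x_n‖ < ‖x‖_0 for all n ≠ n_0 and x_{n_0} is a smooth point of X_{n_0}. -/

import Mathlib

open scoped ENNReal
open Filter

/-- The c₀-direct sum of a sequence of normed spaces: the subspace of the ℓ_∞-direct sum
consisting of those sequences whose coordinate norms tend to zero, with the sup norm. -/
noncomputable def c0Sum (E : ℕ → Type*) [∀ n, NormedAddCommGroup (E n)]
    [∀ n, NormedSpace ℝ (E n)] : Submodule ℝ (lp E ∞) where
  carrier := {f | Tendsto (fun n => ‖f n‖) atTop (nhds 0)}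
  add_mem' := by
    intro f g hf hg
    refine squeeze_zero (fun n => norm_nonneg _) (fun n => ?_) (by simpa using hf.add hg)
    simpa using norm_add_le (f n) (g n)
  zero_mem' := by
    show Tendsto (fun n => ‖(0 : lp E ∞) n‖) atTop (nhds 0)
    simp only [lp.coeFn_zero, Pi.zero_apply, norm_zero]
    exact tendsto_const_nhds
  smul_mem' := by
    intro c f hf
    refine squeeze_zero (fun n => norm_nonneg _) (fun n => ?_) (by simpa using hf.const_mul ‖c‖)
    simp [norm_smul]

section Aux

variable {E : ℕ → Type*} [∀ n, NormedAddCommGroup (E n)] [∀ n, NormedSpace ℝ (E n)]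

noncomputable def c0single (n : ℕ) (v : E n) : c0Sum E :=
  ⟨lp.single ∞ n v, by
    have h : ∀ᶠ m in atTop, (0 : ℝ) = ‖(lp.single ∞ n v : lp E ∞) m‖ := by
      filter_upwards [eventually_gt_atTop n] with m hm
      rw [lp.single_apply_ne _ _ _ (Nat.ne_of_gt hm), norm_zero]
    exact tendsto_const_nhds.congr' h⟩

@[simp] lemma c0single_coe_apply_self (n : ℕ) (v : E n) :
    ((c0single n v : c0Sum E) : lp E ∞) n = v := lp.single_apply_self _ _ _

lemma c0single_coe_apply_ne (n : ℕ) (v : E n) {m : ℕ} (h : m ≠ n) :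
    ((c0single n v : c0Sum E) : lp E ∞) m = 0 := lp.single_apply_ne _ _ _ h

lemma norm_c0single (n : ℕ) (v : E n) : ‖(c0single n v : c0Sum E)‖ = ‖v‖ := by
  rw [Submodule.coe_norm]
  apply le_antisymm
  · apply lp.norm_le_of_forall_le (norm_nonneg v)
    intro m
    by_cases h : m = n
    · subst h
      rw [show ((c0single m v : c0Sum E) : lp E ∞) m = v from lp.single_apply_self _ _ _]
    · rw [show ((c0single n v : c0Sum E) : lp E ∞) m = 0 from lp.single_apply_ne _ _ _ h]
      simp
  · have := lp.norm_apply_le_norm ENNReal.top_ne_zero ((c0single n v : c0Sum E) : lp E ∞) n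
    simpa using this

noncomputable def c0singleL (n : ℕ) : E n →L[ℝ] c0Sum E :=
  LinearMap.mkContinuous
    { toFun := c0single n
      map_add' := fun v w => by
        apply Subtype.ext
        apply lp.ext
        funext m
        by_cases h : m = n
        · subst h
          simp [lp.single_apply_self]
        · show lp.single ∞ n (v+w) m = (lp.single ∞ n v + lp.single ∞ n w : lp E ∞) m
          rw [lp.coeFn_add]
          simp [lp.single_apply_ne _ _ _ h]
      map_smul' := fun c v => by
        apply Subtype.ext
        simp [c0single, lp.single_smul] }
    1 (fun v => by
      show ‖(c0single n v : c0Sum E)‖ ≤ 1 * ‖v‖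
      rw [norm_c0single]; simp)

@[simp] lemma c0singleL_apply (n : ℕ) (v : E n) : c0singleL n v = c0single n v := rfl

lemma norm_c0singleL_le (n : ℕ) : ‖(c0singleL n : E n →L[ℝ] c0Sum E)‖ ≤ 1 :=
  LinearMap.mkContinuous_norm_le _ zero_le_one _

noncomputable def c0proj (n : ℕ) : c0Sum E →L[ℝ] E n :=
  LinearMap.mkContinuous
    { toFun := fun x => (x : lp E ∞) n
      map_add' := fun x y => by simp
      map_smul' := fun c x => by simp }
    1 (fun x => by
      show ‖(x : lp E ∞) n‖ ≤ 1 * ‖x‖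
      simpa using lp.norm_apply_le_norm ENNReal.top_ne_zero (x : lp E ∞) n)

@[simp] lemma c0proj_apply (n : ℕ) (x : c0Sum E) : c0proj n x = (x : lp E ∞) n := rfl

lemma norm_c0proj_le (n : ℕ) : ‖(c0proj n : c0Sum E →L[ℝ] E n)‖ ≤ 1 :=
  LinearMap.mkContinuous_norm_le _ zero_le_one _

end Aux

section Aux2

variable {E : ℕ → Type*} [∀ n, NormedAddCommGroup (E n)] [∀ n, NormedSpace ℝ (E n)]

lemma finset_strict_bound (s : Finset ℕ) (f : ℕ → ℝ) {c b : ℝ} (hb : b < c)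
    (h : ∀ n ∈ s, f n < c) : ∃ r, r < c ∧ b ≤ r ∧ ∀ n ∈ s, f n ≤ r := by
  classical
  induction s using Finset.induction_on with
  | empty => exact ⟨b, hb, le_rfl, by simp⟩
  | @insert a s ha ih =>
    obtain ⟨r, hrc, hbr, hr⟩ := ih (fun n hn => h n (Finset.mem_insert_of_mem hn))
    refine ⟨max r (f a), max_lt hrc (h a (Finset.mem_insert_self a s)), le_trans hbr (le_max_left _ _), ?_⟩
    intro n hn
    rcases Finset.mem_insert.mp hn with rfl | hn
    · exact le_max_right _ _
    · exact le_trans (hr n hn) (le_max_left _ _)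

lemma c0_strict_sup (x : c0Sum E) (hx : x ≠ 0) (P : ℕ → Prop)
    (h : ∀ n, P n → ‖(x : lp E ∞) n‖ < ‖x‖) :
    ∃ r, r < ‖x‖ ∧ 0 ≤ r ∧ ∀ n, P n → ‖(x : lp E ∞) n‖ ≤ r := by
  classical
  have hxn : (0:ℝ) < ‖x‖ := norm_pos_iff.mpr hx
  have hev : ∀ᶠ n in atTop, ‖(x : lp E ∞) n‖ < ‖x‖ / 2 :=
    x.2.eventually_lt_const (by linarith)
  obtain ⟨N, hN⟩ := eventually_atTop.mp hev
  obtain ⟨r, hrc, hbr, hr⟩ := finset_strict_bound (Finset.range N)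
    (fun n => if P n then ‖(x : lp E ∞) n‖ else 0)
    (c := ‖x‖) (b := ‖x‖ / 2) (by linarith)
    (fun n _ => by
      show (if P n then ‖(x : lp E ∞) n‖ else 0) < ‖x‖
      by_cases hp : P n
      · rw [if_pos hp]; exact h n hp
      · rw [if_neg hp]; exact hxn)
  refine ⟨r, hrc, by linarith, ?_⟩
  intro n hPn
  by_cases hn : n < N
  · have := hr n (Finset.mem_range.mpr hn)
    simpa [hPn] using this
  · exact le_trans (le_of_lt (hN n (not_lt.mp hn))) hbr

lemma c0_attained (x : c0Sum E) (hx : x ≠ 0) : ∃ n, ‖(x : lp E ∞) n‖ = ‖x‖ := by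
  by_contra hc
  push_neg at hc
  have h : ∀ n, True → ‖(x : lp E ∞) n‖ < ‖x‖ := fun n _ =>
    lt_of_le_of_ne (by simpa using lp.norm_apply_le_norm ENNReal.top_ne_zero (x : lp E ∞) n) (hc n)
  obtain ⟨r, hrc, hr0, hr⟩ := c0_strict_sup x hx (fun _ => True) h
  have : ‖x‖ ≤ r := by
    rw [Submodule.coe_norm]
    exact lp.norm_le_of_forall_le hr0 (fun n => hr n trivial)
  linarith

lemma c0_ext_zero (f : c0Sum E →L[ℝ] ℝ) (h : ∀ n v, f (c0single n v) = 0) : f = 0 := by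
  classical
  ext y
  show f y = 0
  have key : ∀ ε : ℝ, 0 < ε → |f y| ≤ ‖f‖ * ε := by
    intro ε hε
    obtain ⟨N, hN⟩ := eventually_atTop.mp (y.2.eventually_le_const hε)
    set t : c0Sum E := ∑ n ∈ Finset.range N, c0single n ((y : lp E ∞) n) with ht
    have hft : f t = 0 := by
      rw [ht, map_sum]
      exact Finset.sum_eq_zero (fun n _ => h n _)
    have hyt : ‖y - t‖ ≤ ε := by
      rw [Submodule.coe_norm]
      apply lp.norm_le_of_forall_le (le_of_lt hε)
      intro m
      have hcoe : ((y - t : c0Sum E) : lp E ∞) m = (y : lp E ∞) m - (t : lp E ∞) m := by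
        rw [Submodule.coe_sub, lp.coeFn_sub]; rfl
      have htm : (t : lp E ∞) m =
          if m ∈ Finset.range N then (y : lp E ∞) m else 0 := by
        rw [ht]
        have : ((∑ n ∈ Finset.range N, c0single n ((y : lp E ∞) n) : c0Sum E) : lp E ∞)
            = ∑ n ∈ Finset.range N, (lp.single ∞ n ((y : lp E ∞) n) : lp E ∞) := by
          rw [Submodule.coe_sum]; rfl
        rw [this, lp.coeFn_sum, Finset.sum_apply]
        simp only [lp.single_apply]
        rw [Finset.sum_pi_single]
      rw [hcoe, htm]
      by_cases hm : m ∈ Finset.range N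
      · simp [hm, le_of_lt hε]
      · simp only [if_neg hm, sub_zero]
        exact hN m (not_lt.mp (fun hc => hm (Finset.mem_range.mpr hc)))
    calc |f y| = |f (y - t)| := by rw [map_sub, hft, sub_zero]
    _ ≤ ‖f‖ * ‖y - t‖ := f.le_opNorm _
    _ ≤ ‖f‖ * ε := by
        exact mul_le_mul_of_nonneg_left hyt (norm_nonneg f)
  by_contra h0
  have habs : 0 < |f y| := abs_pos.mpr h0
  have hε : 0 < |f y| / (‖f‖ + 1) := div_pos habs (by positivity)
  have := key _ hε
  have hlt : ‖f‖ * (|f y| / (‖f‖ + 1)) < (‖f‖ + 1) * (|f y| / (‖f‖ + 1)) :=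
    mul_lt_mul_of_pos_right (by linarith) hε
  rw [mul_div_cancel₀ _ (by positivity : (‖f‖ + 1) ≠ 0)] at hlt
  linarith

lemma comp_support (x : c0Sum E) (hx : x ≠ 0) (m : ℕ) (hm : ‖(x : lp E ∞) m‖ = ‖x‖)
    (g : E m →L[ℝ] ℝ) (hg1 : ‖g‖ = 1) (hgx : g ((x : lp E ∞) m) = ‖(x : lp E ∞) m‖) :
    ‖g.comp (c0proj m)‖ = 1 ∧ (g.comp (c0proj m)) x = ‖x‖ := by
  have hxn : (0:ℝ) < ‖x‖ := norm_pos_iff.mpr hx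
  have hval : (g.comp (c0proj m)) x = ‖x‖ := by
    rw [ContinuousLinearMap.comp_apply, c0proj_apply, hgx, hm]
  refine ⟨le_antisymm ?_ ?_, hval⟩
  · calc ‖g.comp (c0proj m)‖ ≤ ‖g‖ * ‖(c0proj m : c0Sum E →L[ℝ] E m)‖ :=
        ContinuousLinearMap.opNorm_comp_le _ _
    _ ≤ 1 := by rw [hg1, one_mul]; exact norm_c0proj_le m
  · have := (g.comp (c0proj m)).le_opNorm x
    rw [hval] at this
    have h2 : ‖x‖ ≤ ‖g.comp (c0proj m)‖ * ‖x‖ := le_trans (le_abs_self _) this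
    nlinarith

end Aux2


set_option maxHeartbeats 1000000 in
/-- A nonzero element `x = (x_n)` of the c₀-direct sum ⊕_0 E_n is smooth (has a unique
norm-one support functional) iff there is an index `n₀` such that `‖x_n‖ < ‖x‖` for all
`n ≠ n₀` and `x_{n₀}` is a smooth point of `E_{n₀}`. -/
theorem stmt14 (E : ℕ → Type*) [∀ n, NormedAddCommGroup (E n)]
    [∀ n, NormedSpace ℝ (E n)]
    (x : c0Sum E) (hx : x ≠ 0) :
    (∃! f : (c0Sum E) →L[ℝ] ℝ, ‖f‖ = 1 ∧ f x = ‖x‖) ↔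
      ∃ n₀, (∀ n, n ≠ n₀ → ‖(x : lp E ∞) n‖ < ‖x‖) ∧
        ∃! g : E n₀ →L[ℝ] ℝ, ‖g‖ = 1 ∧ g ((x : lp E ∞) n₀) = ‖(x : lp E ∞) n₀‖ := by
  classical
  have hxn : (0:ℝ) < ‖x‖ := norm_pos_iff.mpr hx
  have hbound : ∀ n, ‖(x : lp E ∞) n‖ ≤ ‖x‖ := fun n => by
    simpa using lp.norm_apply_le_norm ENNReal.top_ne_zero (x : lp E ∞) n
  constructor
  · rintro ⟨f, ⟨hf1, hfx⟩, huniq⟩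
    obtain ⟨n₀, hn₀⟩ := c0_attained x hx
    have hx0 : (x : lp E ∞) n₀ ≠ 0 := by
      intro h; rw [h, norm_zero] at hn₀; linarith
    refine ⟨n₀, ?_, ?_⟩
    · intro n hn
      rcases lt_or_eq_of_le (hbound n) with h | h
      · exact h
      · exfalso
        have hxn0 : (x : lp E ∞) n ≠ 0 := by
          intro h'; rw [h', norm_zero] at h; linarith
        obtain ⟨g₁, hg₁1, hg₁x⟩ := exists_dual_vector ℝ _ (norm_ne_zero_iff.mpr hxn0)
        obtain ⟨g₂, hg₂1, hg₂x⟩ := exists_dual_vector ℝ _ (norm_ne_zero_iff.mpr hx0)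
        have c₁ := comp_support x hx n h g₁ hg₁1 (by exact_mod_cast hg₁x)
        have c₂ := comp_support x hx n₀ hn₀ g₂ hg₂1 (by exact_mod_cast hg₂x)
        have heq : g₁.comp (c0proj n) = g₂.comp (c0proj n₀) :=
          (huniq _ c₁).trans (huniq _ c₂).symm
        have h0 := congrArg (fun F => F (c0single n₀ ((x : lp E ∞) n₀))) heq
        simp only [ContinuousLinearMap.comp_apply, c0proj_apply] at h0
        rw [c0single_coe_apply_ne n₀ _ hn, c0single_coe_apply_self, map_zero] at h0
        rw [show g₂ ((x : lp E ∞) n₀) = ((‖(x : lp E ∞) n₀‖ : ℝ)) from by exact_mod_cast hg₂x,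
          hn₀] at h0
        linarith
    · obtain ⟨g, hg1, hgx⟩ := exists_dual_vector ℝ _ (norm_ne_zero_iff.mpr hx0)
      refine ⟨g, ⟨hg1, by exact_mod_cast hgx⟩, ?_⟩
      rintro g' ⟨hg'1, hg'x⟩
      have c := comp_support x hx n₀ hn₀ g' hg'1 hg'x
      have c2 := comp_support x hx n₀ hn₀ g hg1 (by exact_mod_cast hgx)
      have heq : g'.comp (c0proj n₀) = g.comp (c0proj n₀) :=
        (huniq _ c).trans (huniq _ c2).symm
      ext v
      have h0 := congrArg (fun F => F (c0single n₀ v)) heq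
      simpa only [ContinuousLinearMap.comp_apply, c0proj_apply,
        c0single_coe_apply_self] using h0
  · rintro ⟨n₀, hlt, g, ⟨hg1, hgx⟩, hguniq⟩
    have hn₀ : ‖(x : lp E ∞) n₀‖ = ‖x‖ := by
      obtain ⟨m, hm⟩ := c0_attained x hx
      by_cases h : m = n₀
      · rwa [h] at hm
      · exact absurd hm (ne_of_lt (hlt m h))
    have cF := comp_support x hx n₀ hn₀ g hg1 hgx
    refine ⟨g.comp (c0proj n₀), cF, ?_⟩
    rintro f ⟨hf1, hfx⟩
    obtain ⟨r, hr, hr0, hrb⟩ := c0_strict_sup x hx (fun n => n ≠ n₀) hlt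
    have hsingle0 : ∀ n : ℕ, c0single n (0 : E n) = 0 := fun n => by
      rw [← c0singleL_apply]; exact map_zero _
    have stepA : ∀ n, n ≠ n₀ → ∀ v : E n, f (c0single n v) = 0 := by
      intro n hn v
      by_cases hv : v = 0
      · rw [hv, hsingle0, map_zero]
      · set c := (‖x‖ - r) / ‖v‖ with hc
        have hvpos : 0 < ‖v‖ := norm_pos_iff.mpr hv
        have hcpos : 0 < c := div_pos (by linarith) hvpos
        have key : ∀ s : ℝ, |s| ≤ c → f x + s * f (c0single n v) ≤ ‖x‖ := by
          intro s hs
          have hnorm : ‖x + s • c0single n v‖ ≤ ‖x‖ := by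
            rw [Submodule.coe_norm]
            apply lp.norm_le_of_forall_le (le_of_lt hxn)
            intro m
            have hcoe : ((x + s • c0single n v : c0Sum E) : lp E ∞) m
                = (x : lp E ∞) m + s • ((c0single n v : c0Sum E) : lp E ∞) m := by
              rw [Submodule.coe_add, Submodule.coe_smul, lp.coeFn_add]
              simp [lp.coeFn_smul]
            rw [hcoe]
            by_cases hm : m = n
            · subst hm
              rw [c0single_coe_apply_self]
              calc ‖(x : lp E ∞) m + s • v‖ ≤ ‖(x : lp E ∞) m‖ + ‖s • v‖ := norm_add_le _ _
              _ ≤ r + |s| * ‖v‖ := by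
                  rw [norm_smul, Real.norm_eq_abs]
                  exact add_le_add (hrb m hn) le_rfl
              _ ≤ r + c * ‖v‖ := by nlinarith
              _ = ‖x‖ := by rw [hc]; field_simp; ring
            · rw [c0single_coe_apply_ne _ _ hm, smul_zero, add_zero]
              exact hbound m
          have hle : f (x + s • c0single n v) ≤ ‖x‖ := by
            calc f (x + s • c0single n v) ≤ |f (x + s • c0single n v)| := le_abs_self _
            _ ≤ ‖f‖ * ‖x + s • c0single n v‖ := f.le_opNorm _
            _ ≤ ‖x‖ := by rw [hf1, one_mul]; exact hnorm
          rw [map_add, map_smul, smul_eq_mul] at hle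
          exact hle
        have h1 := key c (le_of_eq (abs_of_pos hcpos))
        have h2 := key (-c) (by rw [abs_neg]; exact le_of_eq (abs_of_pos hcpos))
        rw [hfx] at h1 h2
        rw [neg_mul] at h2
        have h5 : c * f (c0single n v) = 0 := le_antisymm (by linarith) (by linarith)
        exact (mul_eq_zero.mp h5).resolve_left (ne_of_gt hcpos)
    have hdiag : f - f.comp ((c0singleL n₀).comp (c0proj n₀)) = 0 := by
      apply c0_ext_zero
      intro n v
      simp only [ContinuousLinearMap.sub_apply, ContinuousLinearMap.comp_apply,
        c0proj_apply, c0singleL_apply]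
      by_cases hn : n = n₀
      · subst hn
        rw [c0single_coe_apply_self, sub_self]
      · rw [c0single_coe_apply_ne _ _ (Ne.symm hn), hsingle0, map_zero, stepA n hn v, sub_zero]
    have hfy : ∀ y : c0Sum E, f y = f (c0single n₀ ((y : lp E ∞) n₀)) := by
      intro y
      have h0 : (f - f.comp ((c0singleL n₀).comp (c0proj n₀))) y = 0 := by
        rw [hdiag]; rfl
      rw [ContinuousLinearMap.sub_apply, sub_eq_zero] at h0
      exact h0
    set g' := f.comp (c0singleL n₀) with hg'def
    have hg'x : g' ((x : lp E ∞) n₀) = ‖(x : lp E ∞) n₀‖ := by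
      show f (c0single n₀ ((x : lp E ∞) n₀)) = _
      rw [← hfy x, hfx, hn₀]
    have hg'1 : ‖g'‖ = 1 := by
      apply le_antisymm
      · calc ‖g'‖ ≤ ‖f‖ * ‖(c0singleL n₀ : E n₀ →L[ℝ] c0Sum E)‖ :=
            ContinuousLinearMap.opNorm_comp_le _ _
        _ ≤ 1 := by rw [hf1, one_mul]; exact norm_c0singleL_le n₀
      · have hxpos : 0 < ‖(x : lp E ∞) n₀‖ := by rw [hn₀]; exact hxn
        have h2 : ‖(x : lp E ∞) n₀‖ ≤ ‖g'‖ * ‖(x : lp E ∞) n₀‖ := by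
          calc ‖(x : lp E ∞) n₀‖ = ‖g' ((x : lp E ∞) n₀)‖ := by
                rw [hg'x, Real.norm_of_nonneg (norm_nonneg _)]
          _ ≤ _ := g'.le_opNorm _
        nlinarith
    have hgg : g' = g := hguniq g' ⟨hg'1, hg'x⟩
    ext y
    show f y = g ((y : lp E ∞) n₀)
    rw [hfy y, ← hgg]
    rfl
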